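/- (Proposition 4: the Schmidt basis minimizes participation entropy over product bases.) Let M : Matrix ι κ ℂ with ι, κ finite, let hM : (M * Mᴴ).IsHermitian, and let λ := hM.eigenvalues : ι → ℝ be the eigenvalues of the positive semidefinite matrix M * Mᴴ (the squared Schmidt coefficients). Then for every real α > 1 one has ∑_{i,j} ‖M i j‖^(2α) ≤ ∑_i (λ i)^α, and for every real α with 0 < α < 1 one has ∑_{i,j} ‖M i j‖^(2α) ≥ ∑_i (λ i)^α. Consequently, for every α ∈ (0,1) ∪ (1,∞) the α-Rényi entropy (1/(1−α))·log of the coefficient distribution {‖M i j‖²} is at least the α-Rényi entropy of the Schmidt spectrum {λ i}. -/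

import Mathlib

open Matrix Kronecker
open scoped Classical

noncomputable section

/-- Single-qubit Pauli matrices. -/
def pauli : Fin 4 → Matrix (Fin 2) (Fin 2) ℂ :=
  ![1, !![0, 1; 1, 0], !![0, -Complex.I; Complex.I, 0], !![1, 0; 0, -1]]

/-- Pauli string on `N` qubits with label `a`. -/
def PauliString {N : ℕ} (a : Fin N → Fin 4) :
    Matrix (Fin N → Fin 2) (Fin N → Fin 2) ℂ :=
  fun f g => ∏ k, pauli (a k) (f k) (g k)

/-- Reduced Choi state: partial trace over the doubled-B factor of the
normalized Choi state of `O`. -/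
def rhoA {ιA ιB : Type*} [Fintype ιA] [Fintype ιB]
    (O : Matrix (ιA × ιB) (ιA × ιB) ℂ) :
    Matrix (ιA × ιA) (ιA × ιA) ℂ :=
  fun p q =>
    (1 / (Fintype.card ιA * Fintype.card ιB : ℂ)) *
      ∑ b : ιB, ∑ b' : ιB, O (p.1, b) (p.2, b') * star (O (q.1, b) (q.2, b'))

/-- Identification of `N = N_A + N_B` qubits with the pair of subsystems. -/
def qubitEquiv (NA NB : ℕ) :
    (Fin (NA + NB) → Fin 2) ≃ (Fin NA → Fin 2) × (Fin NB → Fin 2) :=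
  (Equiv.arrowCongr finSumFinEquiv.symm (Equiv.refl (Fin 2))).trans
    (Equiv.sumArrowEquivProdArrow _ _ _)

/-- Reduced Choi state of an `N = N_A + N_B` qubit operator, subsystem A
being the first `N_A` qubits. -/
def rhoAq (NA NB : ℕ)
    (O : Matrix (Fin (NA + NB) → Fin 2) (Fin (NA + NB) → Fin 2) ℂ) :
    Matrix ((Fin NA → Fin 2) × (Fin NA → Fin 2))
      ((Fin NA → Fin 2) × (Fin NA → Fin 2)) ℂ :=
  rhoA (Matrix.reindex (qubitEquiv NA NB) (qubitEquiv NA NB) O)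

/-- `n`-fold replica (tensor power) of a matrix. -/
def replica {ι : Type*} (n : ℕ) (O : Matrix ι ι ℂ) :
    Matrix (Fin n → ι) (Fin n → ι) ℂ :=
  fun f g => ∏ a, O (f a) (g a)

/-- Replica permutation operator. -/
def Tperm {ι : Type*} [DecidableEq ι] {n : ℕ} (π : Equiv.Perm (Fin n)) :
    Matrix (Fin n → ι) (Fin n → ι) ℂ :=
  fun f g => if f = g ∘ π then 1 else 0

/-- Number of cycles of a permutation, counting fixed points as 1-cycles. -/
def numCycles {n : ℕ} (π : Equiv.Perm (Fin n)) : ℕ :=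
  Multiset.card π.cycleType + (Finset.univ.filter fun x => π x = x).card

/-- `δ(π) = 0` if `π` has no fixed points and all cycles of even length,
else `δ(π) = 1`. -/
def deltaOdd {n : ℕ} (π : Equiv.Perm (Fin n)) : ℕ :=
  if (∀ x, π x ≠ x) ∧ (∀ c ∈ π.cycleType, Even c) then 0 else 1

/-- Projector onto four-fold replicated Pauli strings. -/
def LambdaPlus (N : ℕ) :
    Matrix (Fin 4 → (Fin N → Fin 2)) (Fin 4 → (Fin N → Fin 2)) ℂ :=
  (1 / (4 ^ N : ℂ)) • ∑ a : Fin N → Fin 4, replica 4 (PauliString a)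

def permA : Equiv.Perm (Fin 4) := Equiv.swap 0 1 * Equiv.swap 2 3
def permB : Equiv.Perm (Fin 4) := Equiv.swap 0 3 * Equiv.swap 1 2

/-- The purity contraction permutation operator `T'` on four replicas of a
bipartite system. -/
def Tprime {ιA ιB : Type*} [DecidableEq ιA] [DecidableEq ιB] :
    Matrix (Fin 4 → ιA × ιB) (Fin 4 → ιA × ιB) ℂ :=
  fun f g =>
    if (∀ a, (f a).1 = (g (permA a)).1 ∧ (f a).2 = (g (permB a)).2) then 1 else 0

/-- The unitary stabilizer group of `U` (as a finite set of pairs of Pauli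
labels). -/
def Stab {N : ℕ} (U : Matrix (Fin N → Fin 2) (Fin N → Fin 2) ℂ) :
    Finset ((Fin N → Fin 4) × (Fin N → Fin 4)) :=
  Finset.univ.filter fun p =>
    Matrix.trace (PauliString p.1 * Uᴴ * PauliString p.2 * U) / (2 ^ N : ℂ)
      ∈ ({1, -1} : Set ℂ)



private lemma sum_rpow_le_rpow_sum_aux {J : Type*} [Fintype J] (x : J → ℝ)
    (hx : ∀ j, 0 ≤ x j) {α : ℝ} (hα : 1 ≤ α) :
    ∑ j, x j ^ α ≤ (∑ j, x j) ^ α := by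
  have hα0 : (0:ℝ) < α := lt_of_lt_of_le one_pos hα
  have hS0 : 0 ≤ ∑ j, x j := Finset.sum_nonneg fun j _ => hx j
  rcases eq_or_lt_of_le hS0 with h0 | hpos
  · have hz : ∀ j ∈ Finset.univ, x j = (0:ℝ) :=
      (Finset.sum_eq_zero_iff_of_nonneg fun j _ => hx j).mp h0.symm
    rw [← h0, Real.zero_rpow hα0.ne']
    refine le_of_eq (Finset.sum_eq_zero fun j hj => ?_)
    rw [hz j hj, Real.zero_rpow hα0.ne']
  · have key : ∀ j, x j ^ α ≤ (∑ j, x j) ^ (α - 1) * x j := by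
      intro j
      rcases eq_or_lt_of_le (hx j) with h0 | hxp
      · rw [← h0, Real.zero_rpow hα0.ne', mul_zero]
      · have hx_le : x j ≤ ∑ j, x j :=
          Finset.single_le_sum (fun j _ => hx j) (Finset.mem_univ j)
        have e1 : x j ^ α = x j ^ (α - 1) * x j := by
          rw [← Real.rpow_add_one hxp.ne']
          congr 1
          ring
        rw [e1]
        exact mul_le_mul_of_nonneg_right
          (Real.rpow_le_rpow hxp.le hx_le (by linarith)) (hx j)
    calc ∑ j, x j ^ α ≤ ∑ j, (∑ j, x j) ^ (α - 1) * x j :=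
          Finset.sum_le_sum fun j _ => key j
      _ = (∑ j, x j) ^ (α - 1) * ∑ j, x j := by rw [← Finset.mul_sum]
      _ = (∑ j, x j) ^ α := by
          rw [← Real.rpow_add_one hpos.ne']
          congr 1
          ring

private lemma rpow_sum_le_sum_rpow_aux {J : Type*} [Fintype J] (x : J → ℝ)
    (hx : ∀ j, 0 ≤ x j) {α : ℝ} (hα0 : 0 < α) (hα1 : α ≤ 1) :
    (∑ j, x j) ^ α ≤ ∑ j, x j ^ α := by
  have hS0 : 0 ≤ ∑ j, x j := Finset.sum_nonneg fun j _ => hx j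
  rcases eq_or_lt_of_le hS0 with h0 | hpos
  · rw [← h0, Real.zero_rpow hα0.ne']
    exact Finset.sum_nonneg fun j _ => Real.rpow_nonneg (hx j) α
  · have key : ∀ j, (∑ j, x j) ^ (α - 1) * x j ≤ x j ^ α := by
      intro j
      rcases eq_or_lt_of_le (hx j) with h0 | hxp
      · rw [← h0, mul_zero, Real.zero_rpow hα0.ne']
      · have hx_le : x j ≤ ∑ j, x j :=
          Finset.single_le_sum (fun j _ => hx j) (Finset.mem_univ j)
        have e1 : x j ^ α = x j ^ (α - 1) * x j := by
          rw [← Real.rpow_add_one hxp.ne']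
          congr 1
          ring
        rw [e1]
        exact mul_le_mul_of_nonneg_right
          (Real.rpow_le_rpow_of_nonpos hxp hx_le (by linarith)) (hx j)
    calc (∑ j, x j) ^ α = (∑ j, x j) ^ (α - 1) * ∑ j, x j := by
          rw [← Real.rpow_add_one hpos.ne']
          congr 1
          ring
      _ = ∑ j, (∑ j, x j) ^ (α - 1) * x j := Finset.mul_sum _ _ _
      _ ≤ ∑ j, x j ^ α := Finset.sum_le_sum fun j _ => key j


/-- Proposition 4: the Schmidt basis minimizes participation
entropy over product bases. -/
theorem schmidt_minimizes_participation_entropy {ι κ : Type*}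
    [Fintype ι] [Fintype κ] [DecidableEq ι]
    (M : Matrix ι κ ℂ) (hM : (M * Mᴴ).IsHermitian) :
    (∀ α : ℝ, 1 < α →
      ∑ i : ι, ∑ j : κ, ‖M i j‖ ^ (2 * α) ≤ ∑ i : ι, hM.eigenvalues i ^ α) ∧
    (∀ α : ℝ, 0 < α → α < 1 →
      ∑ i : ι, hM.eigenvalues i ^ α ≤ ∑ i : ι, ∑ j : κ, ‖M i j‖ ^ (2 * α)) ∧
    (∀ α : ℝ, 0 < α → α ≠ 1 →
      (1 / (1 - α)) * Real.log (∑ i : ι, hM.eigenvalues i ^ α) ≤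
        (1 / (1 - α)) * Real.log (∑ i : ι, ∑ j : κ, ‖M i j‖ ^ (2 * α))) := by
  set U : Matrix ι ι ℂ := (hM.eigenvectorUnitary : Matrix ι ι ℂ) with hU
  have h1 : ∀ i, (M * Mᴴ) i i = ((∑ j, ‖M i j‖ ^ 2 : ℝ) : ℂ) := by
    intro i
    simp [Matrix.mul_apply, Matrix.conjTranspose_apply, Complex.mul_conj',
      Complex.ofReal_sum]
  have h2 : ∀ i, (M * Mᴴ) i i
      = ∑ k, ((hM.eigenvalues k : ℝ) : ℂ) * ((‖U i k‖ ^ 2 : ℝ) : ℂ) := by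
    intro i
    conv_lhs => rw [hM.spectral_theorem]
    rw [Unitary.conjStarAlgAut_apply, Matrix.mul_apply]
    refine Finset.sum_congr rfl fun k _ => ?_
    rw [Matrix.mul_diagonal, Matrix.star_apply]
    rw [mul_comm ((U : Matrix ι ι ℂ) i k), mul_assoc]
    simp only [← hU, Function.comp_apply, RCLike.star_def, RCLike.mul_conj]
    push_cast
    norm_cast
  have hUU : U * star U = 1 := Matrix.mem_unitaryGroup_iff.mp (hM.eigenvectorUnitary).2
  have hUU' : star U * U = 1 := Matrix.mem_unitaryGroup_iff'.mp (hM.eigenvectorUnitary).2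
  have hrow : ∀ i, ∑ k, ‖U i k‖ ^ 2 = 1 := by
    intro i
    have h := congrFun (congrFun hUU i) i
    rw [Matrix.mul_apply, Matrix.one_apply_eq] at h
    have h' : ((∑ k, ‖U i k‖ ^ 2 : ℝ) : ℂ) = 1 := by
      rw [← h]
      push_cast
      refine (Finset.sum_congr rfl fun k _ => ?_).symm
      rw [Matrix.star_apply]
      simp only [← hU, RCLike.star_def, RCLike.mul_conj]
      norm_cast
    exact_mod_cast h'
  have hcol : ∀ k, ∑ i, ‖U i k‖ ^ 2 = 1 := by
    intro k
    have h := congrFun (congrFun hUU' k) k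
    rw [Matrix.mul_apply, Matrix.one_apply_eq] at h
    have h' : ((∑ i, ‖U i k‖ ^ 2 : ℝ) : ℂ) = 1 := by
      rw [← h]
      push_cast
      refine (Finset.sum_congr rfl fun i _ => ?_).symm
      rw [Matrix.star_apply]
      simp only [← hU, RCLike.star_def, RCLike.conj_mul]
      norm_cast
    exact_mod_cast h'
  have hdA : ∀ i, ∑ j, ‖M i j‖ ^ 2 = ∑ k, ‖U i k‖ ^ 2 * hM.eigenvalues k := by
    intro i
    have hh := (h1 i).symm.trans (h2 i)
    have h' : ((∑ j, ‖M i j‖ ^ 2 : ℝ) : ℂ)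
        = ((∑ k, ‖U i k‖ ^ 2 * hM.eigenvalues k : ℝ) : ℂ) := by
      rw [hh]; push_cast; exact Finset.sum_congr rfl fun k _ => by ring
    exact_mod_cast h'
  have hlam0 : ∀ k, 0 ≤ hM.eigenvalues k := fun k =>
    Matrix.eigenvalues_self_mul_conjTranspose_nonneg M k
  have hw0 : ∀ i k, (0:ℝ) ≤ ‖U i k‖ ^ 2 := fun i k => sq_nonneg _
  have hq : ∀ (α : ℝ) (i : ι) (j : κ), ‖M i j‖ ^ (2 * α) = (‖M i j‖ ^ 2 : ℝ) ^ α := by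
    intro α i j
    rw [Real.rpow_mul (norm_nonneg _)]
    congr 1
    rw [show (2:ℝ) = ((2:ℕ):ℝ) by norm_num, Real.rpow_natCast]
  have htrace : ∑ i : ι, ∑ j : κ, ‖M i j‖ ^ 2 = ∑ k, hM.eigenvalues k := by
    calc ∑ i : ι, ∑ j : κ, ‖M i j‖ ^ 2
        = ∑ i : ι, ∑ k, ‖U i k‖ ^ 2 * hM.eigenvalues k := by simp_rw [hdA]
      _ = ∑ k, hM.eigenvalues k := by
          rw [Finset.sum_comm]
          refine Finset.sum_congr rfl fun k _ => ?_
          rw [← Finset.sum_mul, hcol k, one_mul]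
  have main1 : ∀ α : ℝ, 1 < α →
      ∑ i : ι, ∑ j : κ, ‖M i j‖ ^ (2 * α) ≤ ∑ i : ι, hM.eigenvalues i ^ α := by
    intro α hα
    have hα1 : (1:ℝ) ≤ α := hα.le
    calc ∑ i : ι, ∑ j : κ, ‖M i j‖ ^ (2 * α)
        = ∑ i : ι, ∑ j : κ, (‖M i j‖ ^ 2 : ℝ) ^ α := by
          refine Finset.sum_congr rfl fun i _ => Finset.sum_congr rfl fun j _ => hq α i j
      _ ≤ ∑ i : ι, (∑ j : κ, ‖M i j‖ ^ 2) ^ α :=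
          Finset.sum_le_sum fun i _ =>
            sum_rpow_le_rpow_sum_aux _ (fun j => sq_nonneg _) hα1
      _ = ∑ i : ι, (∑ k, ‖U i k‖ ^ 2 * hM.eigenvalues k) ^ α := by
          refine Finset.sum_congr rfl fun i _ => ?_
          rw [hdA]
      _ ≤ ∑ i : ι, ∑ k, ‖U i k‖ ^ 2 * hM.eigenvalues k ^ α :=
          Finset.sum_le_sum fun i _ =>
            Real.rpow_arith_mean_le_arith_mean_rpow Finset.univ _ _
              (fun k _ => hw0 i k) (hrow i) (fun k _ => hlam0 k) hα1
      _ = ∑ k, hM.eigenvalues k ^ α := by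
          rw [Finset.sum_comm]
          refine Finset.sum_congr rfl fun k _ => ?_
          rw [← Finset.sum_mul, hcol k, one_mul]
  have main2 : ∀ α : ℝ, 0 < α → α < 1 →
      ∑ i : ι, hM.eigenvalues i ^ α ≤ ∑ i : ι, ∑ j : κ, ‖M i j‖ ^ (2 * α) := by
    intro α hα0 hα1
    calc ∑ k, hM.eigenvalues k ^ α
        = ∑ i : ι, ∑ k, ‖U i k‖ ^ 2 * hM.eigenvalues k ^ α := by
          rw [Finset.sum_comm]
          refine (Finset.sum_congr rfl fun k _ => ?_).symm
          rw [← Finset.sum_mul, hcol k, one_mul]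
      _ ≤ ∑ i : ι, (∑ k, ‖U i k‖ ^ 2 * hM.eigenvalues k) ^ α := by
          refine Finset.sum_le_sum fun i _ => ?_
          have hJ := (Real.concaveOn_rpow hα0.le hα1.le).le_map_sum
            (fun k (_ : k ∈ Finset.univ) => hw0 i k) (hrow i)
            (fun k _ => hlam0 k)
          simpa [smul_eq_mul] using hJ
      _ = ∑ i : ι, (∑ j : κ, ‖M i j‖ ^ 2) ^ α := by
          refine Finset.sum_congr rfl fun i _ => ?_
          rw [hdA]
      _ ≤ ∑ i : ι, ∑ j : κ, (‖M i j‖ ^ 2 : ℝ) ^ α :=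
          Finset.sum_le_sum fun i _ =>
            rpow_sum_le_sum_rpow_aux _ (fun j => sq_nonneg _) hα0 hα1.le
      _ = ∑ i : ι, ∑ j : κ, ‖M i j‖ ^ (2 * α) := by
          refine Finset.sum_congr rfl fun i _ => Finset.sum_congr rfl fun j _ => (hq α i j).symm
  refine ⟨main1, main2, ?_⟩
  intro α hα0 hαne
  by_cases hz : ∀ k, hM.eigenvalues k = 0
  · have hsum : ∑ i : ι, ∑ j : κ, ‖M i j‖ ^ 2 = 0 := by
      rw [htrace]
      exact Finset.sum_eq_zero fun k _ => hz k
    have hd0 : ∀ i j, ‖M i j‖ = 0 := by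
      intro i j
      have ha := (Finset.sum_eq_zero_iff_of_nonneg
        (fun i _ => Finset.sum_nonneg fun j _ => sq_nonneg ‖M i j‖)).mp hsum i
        (Finset.mem_univ i)
      have hb := (Finset.sum_eq_zero_iff_of_nonneg
        (fun j _ => sq_nonneg ‖M i j‖)).mp ha j (Finset.mem_univ j)
      exact pow_eq_zero_iff two_ne_zero |>.mp hb
    have e1 : ∑ i : ι, hM.eigenvalues i ^ α = 0 :=
      Finset.sum_eq_zero fun k _ => by rw [hz k, Real.zero_rpow hα0.ne']
    have e2 : ∑ i : ι, ∑ j : κ, ‖M i j‖ ^ (2 * α) = 0 :=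
      Finset.sum_eq_zero fun i _ => Finset.sum_eq_zero fun j _ => by
        rw [hd0 i j, Real.zero_rpow (by positivity)]
    rw [e1, e2]
  · push_neg at hz
    obtain ⟨k₀, hk₀⟩ := hz
    have hk0pos : 0 < hM.eigenvalues k₀ := lt_of_le_of_ne (hlam0 k₀) (Ne.symm hk₀)
    have hSlam : 0 < ∑ k, hM.eigenvalues k ^ α :=
      lt_of_lt_of_le (Real.rpow_pos_of_pos hk0pos α)
        (Finset.single_le_sum (fun k _ => Real.rpow_nonneg (hlam0 k) α)
          (Finset.mem_univ k₀))
    rcases lt_or_gt_of_ne hαne with hlt | hgt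
    · have h := main2 α hα0 hlt
      have hc : (0:ℝ) ≤ 1 / (1 - α) := by
        have : (0:ℝ) < 1 - α := by linarith
        positivity
      exact mul_le_mul_of_nonneg_left (Real.log_le_log hSlam h) hc
    · have h := main1 α hgt
      have hdpos : 0 < ∑ i : ι, ∑ j : κ, ‖M i j‖ ^ 2 := by
        rw [htrace]
        exact lt_of_lt_of_le hk0pos
          (Finset.single_le_sum (fun k _ => hlam0 k) (Finset.mem_univ k₀))
      have hSq : 0 < ∑ i : ι, ∑ j : κ, ‖M i j‖ ^ (2 * α) := by
        obtain ⟨i, -, hi⟩ := Finset.exists_lt_of_sum_lt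
          (f := fun _ : ι => (0:ℝ)) (by simpa only [Finset.sum_const_zero] using hdpos)
        obtain ⟨j, -, hj⟩ := Finset.exists_lt_of_sum_lt
          (f := fun _ : κ => (0:ℝ)) (by simpa only [Finset.sum_const_zero] using hi)
        have hMpos : 0 < ‖M i j‖ := by
          rcases eq_or_lt_of_le (norm_nonneg (M i j)) with h0 | h0
          · rw [← h0] at hj; simp at hj
          · exact h0
        refine Finset.sum_pos'
          (fun i _ => Finset.sum_nonneg fun j _ => Real.rpow_nonneg (norm_nonneg _) _)
          ⟨i, Finset.mem_univ i, Finset.sum_pos'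
            (fun j _ => Real.rpow_nonneg (norm_nonneg _) _)
            ⟨j, Finset.mem_univ j, Real.rpow_pos_of_pos hMpos _⟩⟩
      have hc : 1 / (1 - α) ≤ 0 :=
        le_of_lt (div_neg_of_pos_of_neg one_pos (by linarith))
      exact mul_le_mul_of_nonpos_left (Real.log_le_log hSq h) hc


end
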